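/- Let ε > 0 and H: ℝ^k × ℝ^j → ℝ be continuously differentiable in z, satisfying for each z: w ↦ e^{−H(z,w)/ε} integrable with strictly positive integral, w ↦ ∇_zH(z,w)e^{−H(z,w)/ε} integrable, and local domination permitting differentiation under the integral sign. Let J̄ ∈ ℝ^{k×k} be skew-symmetric and D̄ ∈ ℝ^{k×k} symmetric positive semidefinite, and define the projected drift f̄(z) := (J̄ − D̄)·(∫∇_zH(z,w)e^{−H(z,w)/ε}dw / ∫e^{−H(z,w)/ε}dw). Then f̄(z) = (J̄ − D̄)∇L̄(z) for the free energy L̄(z) = −ε log ∫ e^{−H(z,w)/ε}dw, and L̄ solves the projected HJB equation f̄(z)·∇L̄(z) + (∇L̄(z))ᵀ D̄ ∇L̄(z) = 0 for every z. -/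

import Mathlib

open Matrix MeasureTheory

/-- The continuous linear map `v ↦ a ⬝ᵥ v`, representing the differential of a scalar
function with gradient vector `a`. -/
noncomputable def dotCLM {n : ℕ} (a : Fin n → ℝ) : (Fin n → ℝ) →L[ℝ] ℝ :=
  LinearMap.toContinuousLinearMap
    { toFun := fun v => a ⬝ᵥ v
      map_add' := by intro v w; simp [dotProduct_add]
      map_smul' := by intro c v; simp [dotProduct_smul] }

lemma dotCLM_apply {n : ℕ} (a v : Fin n → ℝ) : dotCLM a v = a ⬝ᵥ v := rfl

/-- `a ↦ dotCLM a` as a continuous linear map. -/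
noncomputable def dotL (n : ℕ) : (Fin n → ℝ) →L[ℝ] ((Fin n → ℝ) →L[ℝ] ℝ) :=
  LinearMap.toContinuousLinearMap
    { toFun := dotCLM
      map_add' := by
        intro a b; ext v; simp [dotCLM_apply, add_dotProduct]
      map_smul' := by
        intro c a; ext v; simp [dotCLM_apply, smul_dotProduct] }

lemma dotL_apply {n : ℕ} (a : Fin n → ℝ) : dotL n a = dotCLM a := rfl

lemma dotCLM_smul {n : ℕ} (c : ℝ) (a : Fin n → ℝ) : dotCLM (c • a) = c • dotCLM a := by
  ext v
  simp [dotCLM_apply, smul_dotProduct, smul_eq_mul]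

lemma dotCLM_norm_le {n : ℕ} (a : Fin n → ℝ) : ‖dotCLM a‖ ≤ n * ‖a‖ := by
  apply ContinuousLinearMap.opNorm_le_bound _ (by positivity)
  intro v
  rw [dotCLM_apply]
  calc ‖a ⬝ᵥ v‖ = |∑ i, a i * v i| := rfl
    _ ≤ ∑ i, |a i * v i| := Finset.abs_sum_le_sum_abs _ _
    _ ≤ ∑ _i : Fin n, ‖a‖ * ‖v‖ := by
        refine Finset.sum_le_sum fun i _ => ?_
        rw [abs_mul]
        exact mul_le_mul (norm_le_pi_norm a i) (norm_le_pi_norm v i)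
          (abs_nonneg _) (norm_nonneg a)
    _ = n * ‖a‖ * ‖v‖ := by simp [mul_assoc]

lemma free_energy_hasFDerivAt
    (k j : ℕ) (ε : ℝ) (hε : 0 < ε)
    (H : (Fin k → ℝ) → (Fin j → ℝ) → ℝ)
    (gradzH : (Fin k → ℝ) → (Fin j → ℝ) → (Fin k → ℝ))
    (hH : ∀ z w, HasFDerivAt (fun z' => H z' w) (dotCLM (gradzH z w)) z)
    (hint : ∀ z, Integrable fun w => Real.exp (-H z w / ε))
    (hintgrad : ∀ z, Integrable fun w => Real.exp (-H z w / ε) • gradzH z w)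
    (hdom : ∀ z₀ : Fin k → ℝ, ∃ δ > 0, ∃ bound : (Fin j → ℝ) → ℝ,
      Integrable bound ∧ ∀ z ∈ Metric.ball z₀ δ, ∀ w,
        ‖(ε⁻¹ * Real.exp (-H z w / ε)) • gradzH z w‖ ≤ bound w)
    (z₀ : Fin k → ℝ) :
    HasFDerivAt (fun z => ∫ w, Real.exp (-H z w / ε))
      (dotCLM ((-ε⁻¹ : ℝ) • ∫ w, Real.exp (-H z₀ w / ε) • gradzH z₀ w)) z₀ := by
  obtain ⟨δ, hδ, bound, hbint, hb⟩ := hdom z₀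
  set F' : (Fin k → ℝ) → (Fin j → ℝ) → (Fin k → ℝ) →L[ℝ] ℝ :=
    fun z w => dotCLM ((-(ε⁻¹ * Real.exp (-H z w / ε))) • gradzH z w) with hF'
  have hF'eq : ∀ z w, F' z w = dotL k ((-ε⁻¹ : ℝ) • (Real.exp (-H z w / ε) • gradzH z w)) := by
    intro z w
    rw [hF', dotL_apply, smul_smul]
    congr 1
    ring
  have hderiv : ∀ z w, HasFDerivAt (fun z' => Real.exp (-H z' w / ε)) (F' z w) z := by
    intro z w
    have h0 := (hH z w).const_mul (-ε⁻¹ : ℝ)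
    have hfun : (fun z' => (-ε⁻¹ : ℝ) * H z' w) = fun z' => -H z' w / ε := by
      funext z'; rw [div_eq_inv_mul]; ring
    rw [hfun] at h0
    have h2 := h0.exp
    have heq : F' z w = Real.exp (-H z w / ε) • ((-ε⁻¹ : ℝ) • dotCLM (gradzH z w)) := by
      show dotCLM ((-(ε⁻¹ * Real.exp (-H z w / ε))) • gradzH z w) = _
      rw [dotCLM_smul, smul_smul]
      congr 1
      ring
    rw [heq]
    exact h2
  have hmain : HasFDerivAt (fun z => ∫ w, Real.exp (-H z w / ε)) (∫ w, F' z₀ w) z₀ := by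
    apply hasFDerivAt_integral_of_dominated_of_fderiv_le (bound := fun w => (k : ℝ) * bound w) (Metric.ball_mem_nhds z₀ hδ)
    · exact Filter.Eventually.of_forall fun z => (hint z).aestronglyMeasurable
    · exact hint z₀
    · have h1 := (hintgrad z₀).aestronglyMeasurable.const_smul (-ε⁻¹ : ℝ)
      have h2 := (dotL k).continuous.comp_aestronglyMeasurable h1
      exact h2.congr (Filter.Eventually.of_forall fun w => (hF'eq z₀ w).symm)
    · exact Filter.Eventually.of_forall fun w z hz => by
        calc ‖F' z w‖ ≤ k * ‖(-(ε⁻¹ * Real.exp (-H z w / ε))) • gradzH z w‖ := dotCLM_norm_le _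
          _ = k * ‖(ε⁻¹ * Real.exp (-H z w / ε)) • gradzH z w‖ := by
              rw [neg_smul, norm_neg]
          _ ≤ k * bound w := by
              exact mul_le_mul_of_nonneg_left (hb z hz w) (Nat.cast_nonneg k)
    · exact hbint.const_mul _
    · exact Filter.Eventually.of_forall fun w z _ => hderiv z w
  have : (∫ w, F' z₀ w) = dotCLM ((-ε⁻¹ : ℝ) • ∫ w, Real.exp (-H z₀ w / ε) • gradzH z₀ w) := by
    have hInt2 : Integrable
        (fun w => (-ε⁻¹ : ℝ) • (Real.exp (-H z₀ w / ε) • gradzH z₀ w)) volume :=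
      (hintgrad z₀).smul (-ε⁻¹ : ℝ)
    calc (∫ w, F' z₀ w)
        = ∫ w, dotL k ((-ε⁻¹ : ℝ) • (Real.exp (-H z₀ w / ε) • gradzH z₀ w)) := by
          simp_rw [hF'eq z₀]
      _ = dotL k (∫ w, (-ε⁻¹ : ℝ) • (Real.exp (-H z₀ w / ε) • gradzH z₀ w)) :=
          ContinuousLinearMap.integral_comp_comm (dotL k) hInt2
      _ = dotCLM ((-ε⁻¹ : ℝ) • ∫ w, Real.exp (-H z₀ w / ε) • gradzH z₀ w) := by
          rw [integral_smul, dotL_apply]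
  rwa [this] at hmain

/-- The projected drift `f̄(z) = (J̄-D̄)·⟨∇_zH⟩_z` (Gibbs conditional average) equals
`(J̄-D̄)∇L̄(z)` for the free energy `L̄(z) = -ε log ∫ e^{-H(z,w)/ε} dw`, and `L̄` solves the
projected HJB equation `f̄·∇L̄ + (∇L̄)ᵀD̄∇L̄ = 0`. -/
theorem free_energy_solves_projected_HJB
    (k j : ℕ) (ε : ℝ) (hε : 0 < ε)
    (H : (Fin k → ℝ) → (Fin j → ℝ) → ℝ)
    (gradzH : (Fin k → ℝ) → (Fin j → ℝ) → (Fin k → ℝ))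
    -- `H` is continuously differentiable in `z` with `z`-gradient `gradzH`:
    (hH : ∀ z w, HasFDerivAt (fun z' => H z' w) (dotCLM (gradzH z w)) z)
    (hHC1 : ∀ w, Continuous fun z => gradzH z w)
    -- `w ↦ e^{-H(z,w)/ε}` is integrable with strictly positive integral:
    (hint : ∀ z, Integrable fun w => Real.exp (-H z w / ε))
    (hpos : ∀ z, 0 < ∫ w, Real.exp (-H z w / ε))
    -- `w ↦ ∇_zH(z,w) e^{-H(z,w)/ε}` is integrable:
    (hintgrad : ∀ z, Integrable fun w => Real.exp (-H z w / ε) • gradzH z w)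
    -- locally in `z`, the functions `w ↦ ∇_z(e^{-H(z,w)/ε})` admit an integrable
    -- dominating function:
    (hdom : ∀ z₀ : Fin k → ℝ, ∃ δ > 0, ∃ bound : (Fin j → ℝ) → ℝ,
      Integrable bound ∧ ∀ z ∈ Metric.ball z₀ δ, ∀ w,
        ‖(ε⁻¹ * Real.exp (-H z w / ε)) • gradzH z w‖ ≤ bound w)
    -- structure and friction blocks of the resolved variables:
    (Jbar Dbar : Matrix (Fin k) (Fin k) ℝ)
    (hJbar : Jbarᵀ = -Jbar) (hDbar : Dbar.PosSemidef)
    -- the projected drift: the Gibbs conditional average of the `z`-drift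
    (fbar : (Fin k → ℝ) → (Fin k → ℝ))
    (hfbar : fbar = fun z => (Jbar - Dbar) *ᵥ
      ((∫ w, Real.exp (-H z w / ε))⁻¹ • ∫ w, Real.exp (-H z w / ε) • gradzH z w))
    -- the free energy `L̄` and its gradient `gradLbar`:
    (Lbar : (Fin k → ℝ) → ℝ)
    (hLbar : Lbar = fun z => -ε * Real.log (∫ w, Real.exp (-H z w / ε)))
    (gradLbar : (Fin k → ℝ) → (Fin k → ℝ))
    (hgradLbar : ∀ z, HasFDerivAt Lbar (dotCLM (gradLbar z)) z) :
    ∀ z, fbar z = (Jbar - Dbar) *ᵥ gradLbar z ∧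
      fbar z ⬝ᵥ gradLbar z + gradLbar z ⬝ᵥ (Dbar *ᵥ gradLbar z) = 0 := by
  intro z
  set Fz : ℝ := ∫ w, Real.exp (-H z w / ε) with hFz
  set I : Fin k → ℝ := ∫ w, Real.exp (-H z w / ε) • gradzH z w with hI
  have hFne : Fz ≠ 0 := (hpos z).ne'
  have hkey := free_energy_hasFDerivAt k j ε hε H gradzH hH hint hintgrad hdom z
  have hlog := hkey.log hFne
  have hL : HasFDerivAt Lbar (dotCLM (Fz⁻¹ • I)) z := by
    rw [hLbar]
    have h2 := hlog.const_mul (-ε)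
    refine (h2.congr_fderiv ?_)
    symm
    rw [dotCLM_smul, dotCLM_smul, smul_smul, smul_smul]
    congr 1
    field_simp
    simp_rw [← neg_div]
    rw [← hFz, div_self hFne]
  have huniq : dotCLM (gradLbar z) = dotCLM (Fz⁻¹ • I) := (hgradLbar z).unique hL
  have hg : gradLbar z = Fz⁻¹ • I := by
    funext i
    have := ContinuousLinearMap.ext_iff.mp huniq (Pi.single i 1)
    simpa [dotCLM_apply, dotProduct_single] using this
  have hf : fbar z = (Jbar - Dbar) *ᵥ gradLbar z := by
    rw [hfbar, hg]
  refine ⟨hf, ?_⟩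
  set g : Fin k → ℝ := gradLbar z
  have hskew : (Jbar *ᵥ g) ⬝ᵥ g = 0 := by
    have h1 : (Jbar *ᵥ g) ⬝ᵥ g = -((Jbar *ᵥ g) ⬝ᵥ g) := by
      calc (Jbar *ᵥ g) ⬝ᵥ g = g ⬝ᵥ (Jbar *ᵥ g) := dotProduct_comm _ _
        _ = (g ᵥ* Jbar) ⬝ᵥ g := Matrix.dotProduct_mulVec _ _ _
        _ = (Jbarᵀ *ᵥ g) ⬝ᵥ g := by rw [Matrix.mulVec_transpose]
        _ = ((-Jbar) *ᵥ g) ⬝ᵥ g := by rw [hJbar]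
        _ = -((Jbar *ᵥ g) ⬝ᵥ g) := by rw [Matrix.neg_mulVec, neg_dotProduct]
    linarith
  have hcomm : (Dbar *ᵥ g) ⬝ᵥ g = g ⬝ᵥ (Dbar *ᵥ g) := dotProduct_comm _ _
  rw [hf, Matrix.sub_mulVec, sub_dotProduct]
  linarith
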